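/- Let μ ≈ solve f(μ) = k with f(x) = x(e^x−1)/(e^x−1−x), and define β_k = (e^{−μ} μ^2/2) / (Σ_{j≥2} e^{−μ} μ^j / j!) = (μ^2/2)/(e^μ − 1 − μ). Then μ_k > 2 for every integer k ≥ 3, the function x ↦ x^2/(2(e^x − 1 − x)) is strictly decreasing for x > 2, and consequently β_k ≤ β_3 < 0.45 for every k ≥ 3. -/

import Mathlib

open Real Set

lemma D_pos {x : ℝ} (hx : 0 < x) : 0 < Real.exp x - 1 - x := by
  have := Real.add_one_lt_exp (ne_of_gt hx); linarith

lemma key_ineq {x : ℝ} (hx : 0 < x) :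
    x ^ 2 * Real.exp x < (Real.exp x - 1) ^ 2 := by
  set t := x / 2 with ht_def
  have ht : 0 < t := by positivity
  have h1 : 1 + t + t ^ 2 / 2 + t ^ 3 / 6 ≤ Real.exp t := by
    have := Real.sum_le_exp_of_nonneg ht.le 4
    simp [Finset.sum_range_succ, Nat.factorial] at this
    linarith
  have huv : Real.exp t * Real.exp (-t) = 1 := by
    rw [← Real.exp_add]; simp
  have hv : 0 < Real.exp (-t) := Real.exp_pos _
  have hu : 0 < Real.exp t := Real.exp_pos _
  have hsinh : 2 * t < Real.exp t - Real.exp (-t) := by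
    nlinarith [mul_pos ht hv, mul_pos ht hu, sq_nonneg t,
      mul_pos (mul_pos ht ht) ht]
  have hx2 : Real.exp x = Real.exp t * Real.exp t := by
    rw [← Real.exp_add]; congr 1; rw [ht_def]; ring
  have hxt : x = 2 * t := by rw [ht_def]; ring
  rw [hx2, hxt]
  nlinarith [hsinh, huv, hu, hv, mul_pos ht hu,
    mul_pos hu (sub_pos.mpr hsinh)]

lemma f_hasDeriv {x : ℝ} (hx : 0 < x) :
    HasDerivAt (fun y : ℝ => y * (Real.exp y - 1) / (Real.exp y - 1 - y))
      (((Real.exp x - 1) ^ 2 - x ^ 2 * Real.exp x) / (Real.exp x - 1 - x) ^ 2) x := by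
  have hD := D_pos hx
  have h1 : HasDerivAt (fun y : ℝ => y * (Real.exp y - 1))
      (1 * (Real.exp x - 1) + x * Real.exp x) x :=
    (hasDerivAt_id x).mul ((Real.hasDerivAt_exp x).sub_const 1)
  have h2 : HasDerivAt (fun y : ℝ => Real.exp y - 1 - y) (Real.exp x - 1) x := by
    have := ((Real.hasDerivAt_exp x).sub_const 1).sub (hasDerivAt_id x)
    exact this
  have := h1.div h2 (ne_of_gt hD)
  refine this.congr_deriv ?_
  ring

lemma f_mono : StrictMonoOn (fun x : ℝ => x * (Real.exp x - 1) / (Real.exp x - 1 - x))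
    (Set.Ioi (0 : ℝ)) := by
  apply strictMonoOn_of_deriv_pos (convex_Ioi 0)
  · exact fun x hx => ((f_hasDeriv hx).continuousAt).continuousWithinAt
  · intro x hx
    rw [interior_Ioi] at hx
    rw [(f_hasDeriv hx).deriv]
    exact div_pos (by linarith [key_ineq hx]) (pow_pos (D_pos hx) 2)

lemma h_hasDeriv {x : ℝ} (hx : 0 < x) :
    HasDerivAt (fun y : ℝ => y ^ 2 / (2 * (Real.exp y - 1 - y)))
      ((2 * x * (2 * (Real.exp x - 1 - x)) - x ^ 2 * (2 * (Real.exp x - 1))) /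
        (2 * (Real.exp x - 1 - x)) ^ 2) x := by
  have hD := D_pos hx
  have h1 : HasDerivAt (fun y : ℝ => y ^ 2) (2 * x) x := by
    simpa using hasDerivAt_pow 2 x
  have h2 : HasDerivAt (fun y : ℝ => 2 * (Real.exp y - 1 - y)) (2 * (Real.exp x - 1)) x := by
    have : HasDerivAt (fun y : ℝ => Real.exp y - 1 - y) (Real.exp x - 1) x := by
      exact ((Real.hasDerivAt_exp x).sub_const 1).sub (hasDerivAt_id' x)
    exact this.const_mul 2
  exact h1.div h2 (by positivity)

lemma h_anti : StrictAntiOn (fun x : ℝ => x ^ 2 / (2 * (Real.exp x - 1 - x)))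
    (Set.Ioi (2 : ℝ)) := by
  apply strictAntiOn_of_deriv_neg (convex_Ioi 2)
  · exact fun x hx => ((h_hasDeriv (by linarith [mem_Ioi.mp hx])).continuousAt).continuousWithinAt
  · intro x hx
    rw [interior_Ioi] at hx
    have hx2 : (2 : ℝ) < x := hx
    have hx0 : (0 : ℝ) < x := by linarith
    rw [(h_hasDeriv hx0).deriv]
    have hD := D_pos hx0
    apply div_neg_of_neg_of_pos _ (by positivity)
    have hE : 0 < Real.exp x := Real.exp_pos x
    nlinarith [mul_pos hx0 hE, mul_pos (mul_pos hx0 hx0) hE]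

lemma exp_two_gt : (7 : ℝ) < Real.exp 2 := by
  have h := Real.exp_one_gt_d9
  have : Real.exp 2 = Real.exp 1 * Real.exp 1 := by
    rw [← Real.exp_add]; norm_num
  nlinarith

lemma exp_21_gt : (8 : ℝ) < Real.exp 2.1 := by
  have h1 := Real.exp_one_gt_d9
  have h2 : (1.1 : ℝ) < Real.exp 0.1 := by
    have := Real.add_one_lt_exp (x := 0.1) (by norm_num)
    linarith
  have h3 : Real.exp 2.1 = Real.exp 1 * Real.exp 1 * Real.exp 0.1 := by
    rw [← Real.exp_add, ← Real.exp_add]; norm_num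
  have h4 : (0 : ℝ) < Real.exp 0.1 := Real.exp_pos _
  nlinarith

lemma mu_gt_two {k : ℕ} (hk : 3 ≤ k) {μ : ℝ} (hμ : 0 < μ)
    (heq : μ * (Real.exp μ - 1) / (Real.exp μ - 1 - μ) = k) : 2 < μ := by
  by_contra h
  push_neg at h
  have h2 : (0 : ℝ) < 2 := by norm_num
  have hle : μ * (Real.exp μ - 1) / (Real.exp μ - 1 - μ) ≤
      2 * (Real.exp 2 - 1) / (Real.exp 2 - 1 - 2) :=
    f_mono.monotoneOn (mem_Ioi.mpr hμ) (mem_Ioi.mpr h2) h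
  have hD2 : 0 < Real.exp 2 - 1 - 2 := D_pos h2
  have hf2 : 2 * (Real.exp 2 - 1) / (Real.exp 2 - 1 - 2) < 3 := by
    rw [div_lt_iff₀ hD2]
    nlinarith [exp_two_gt]
  have hk3 : (3 : ℝ) ≤ (k : ℝ) := by exact_mod_cast hk
  rw [heq] at hle
  linarith

lemma mu3_gt {μ : ℝ} (hμ : 0 < μ)
    (heq : μ * (Real.exp μ - 1) / (Real.exp μ - 1 - μ) = 3) : 2.1 < μ := by
  by_contra h
  push_neg at h
  have h2 : (0 : ℝ) < 2.1 := by norm_num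
  have hle : μ * (Real.exp μ - 1) / (Real.exp μ - 1 - μ) ≤
      2.1 * (Real.exp 2.1 - 1) / (Real.exp 2.1 - 1 - 2.1) :=
    f_mono.monotoneOn (mem_Ioi.mpr hμ) (mem_Ioi.mpr h2) h
  have hD2 : 0 < Real.exp 2.1 - 1 - 2.1 := D_pos h2
  have hf2 : 2.1 * (Real.exp 2.1 - 1) / (Real.exp 2.1 - 1 - 2.1) < 3 := by
    rw [div_lt_iff₀ hD2]
    nlinarith [exp_21_gt]
  rw [heq] at hle
  linarith

theorem beta_k_bounds :
    (∀ k : ℕ, 3 ≤ k → ∀ μ : ℝ, 0 < μ →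
        μ * (Real.exp μ - 1) / (Real.exp μ - 1 - μ) = k → 2 < μ) ∧
    StrictAntiOn (fun x : ℝ => x ^ 2 / (2 * (Real.exp x - 1 - x))) (Set.Ioi (2 : ℝ)) ∧
    (∀ k : ℕ, 3 ≤ k → ∀ μk μ3 : ℝ,
        0 < μk → μk * (Real.exp μk - 1) / (Real.exp μk - 1 - μk) = k →
        0 < μ3 → μ3 * (Real.exp μ3 - 1) / (Real.exp μ3 - 1 - μ3) = 3 →
        μk ^ 2 / (2 * (Real.exp μk - 1 - μk)) ≤ μ3 ^ 2 / (2 * (Real.exp μ3 - 1 - μ3)) ∧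
        μ3 ^ 2 / (2 * (Real.exp μ3 - 1 - μ3)) < 0.45) := by
  refine ⟨fun k hk μ hμ heq => mu_gt_two hk hμ heq, h_anti, ?_⟩
  intro k hk μk μ3 hμk heqk hμ3 heq3
  have hμk2 : 2 < μk := mu_gt_two hk hμk heqk
  have hμ32 : 2 < μ3 := mu_gt_two (le_refl 3) hμ3 (by exact_mod_cast heq3)
  have hle : μ3 ≤ μk := by
    by_contra h
    push_neg at h
    have := f_mono (mem_Ioi.mpr hμk) (mem_Ioi.mpr hμ3) h
    simp only [heqk, heq3] at this
    have hk3 : (3 : ℝ) ≤ (k : ℝ) := by exact_mod_cast hk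
    linarith
  constructor
  · rcases eq_or_lt_of_le hle with h | h
    · rw [h]
    · exact (h_anti (mem_Ioi.mpr hμ32) (mem_Ioi.mpr hμk2) h).le
  · have hμ321 : 2.1 < μ3 := mu3_gt hμ3 heq3
    have hD : 0 < Real.exp μ3 - 1 - μ3 := D_pos hμ3
    have hmul : μ3 * (Real.exp μ3 - 1) = 3 * (Real.exp μ3 - 1 - μ3) := by
      field_simp at heq3
      linarith [heq3]
    have hval : μ3 ^ 2 / (2 * (Real.exp μ3 - 1 - μ3)) = (3 - μ3) / 2 := by
      rw [div_eq_div_iff (by positivity) (by norm_num)]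
      nlinarith [hmul]
    rw [hval]
    norm_num
    linarith
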